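/- Define F₀(λ) := λ^{3/2}·cos(1/√λ) + (2/(π²·(π² − 1/λ)))·sin(1/√λ) for λ > 0, λ ≠ 1/π². Then F₀(λ) > 0 for all λ ∈ (4/π², ∞); in particular, the equation F₀(λ) = 0 has no root greater than 4/π². -/
import Mathlib


open Real Set intervalIntegral

/-- `F₀(λ) = λ^{3/2} cos(1/√λ) + (2/(π²(π² - 1/λ))) sin(1/√λ)`. -/
noncomputable def FZero (lam : ℝ) : ℝ :=
  lam * Real.sqrt lam * Real.cos (1 / Real.sqrt lam)
    + 2 / (Real.pi ^ 2 * (Real.pi ^ 2 - 1 / lam)) * Real.sin (1 / Real.sqrt lam)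

/-- `F₀(λ) > 0` for all `λ > 4/π²`; in particular `F₀` has no root greater than `4/π²`. -/
theorem stmt12 : ∀ lam : ℝ, 4 / Real.pi ^ 2 < lam → 0 < FZero lam := by
  intro lam hlam
  have hπ : (0:ℝ) < Real.pi := Real.pi_pos
  have hπ2 : (0:ℝ) < Real.pi ^ 2 := by positivity
  have hlam0 : 0 < lam := lt_trans (by positivity) hlam
  have hs0 : 0 < Real.sqrt lam := Real.sqrt_pos.mpr hlam0
  -- √λ > 2/π
  have hs : 2 / Real.pi < Real.sqrt lam := by
    have h4 : 4 / Real.pi ^ 2 = (2 / Real.pi) ^ 2 := by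
      field_simp; ring
    have := Real.sqrt_lt_sqrt (by positivity) hlam
    rwa [h4, Real.sqrt_sq (by positivity)] at this
  -- 1/√λ < π/2
  have hx : 1 / Real.sqrt lam < Real.pi / 2 := by
    rw [div_lt_div_iff₀ hs0 (by norm_num)]
    have h2π : 2 / Real.pi * Real.pi = 2 := by field_simp
    nlinarith [mul_lt_mul_of_pos_right hs hπ]
  have hx0 : 0 < 1 / Real.sqrt lam := by positivity
  have hcos : 0 < Real.cos (1 / Real.sqrt lam) :=
    Real.cos_pos_of_mem_Ioo ⟨by linarith, hx⟩
  have hsin : 0 < Real.sin (1 / Real.sqrt lam) :=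
    Real.sin_pos_of_pos_of_lt_pi hx0 (by linarith)
  -- 1/λ < π²
  have hinv : 1 / lam < Real.pi ^ 2 := by
    rw [div_lt_iff₀ hlam0]
    have : 4 / Real.pi ^ 2 * Real.pi ^ 2 = 4 := by field_simp
    nlinarith [mul_lt_mul_of_pos_right hlam hπ2]
  have hden : 0 < Real.pi ^ 2 * (Real.pi ^ 2 - 1 / lam) := by
    apply mul_pos hπ2; linarith
  have h1 : 0 < lam * Real.sqrt lam * Real.cos (1 / Real.sqrt lam) := by positivity
  have h2 : 0 < 2 / (Real.pi ^ 2 * (Real.pi ^ 2 - 1 / lam)) * Real.sin (1 / Real.sqrt lam) := by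
    positivity
  unfold FZero
  linarith
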